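/- Let $M \geq 2$, $\beta_1,\dots,\beta_M > 0$, and phase errors $e_1,\dots,e_M \in [-\pi/2, \pi/2]$. Define recursively $Q^{(2)} = \beta_1 + \beta_2 + 2\sqrt{\beta_1\beta_2}\cos(e_2)$ and $Q^{(k+1)} = \beta_{k+1} + Q^{(k)} + 2\cos(e_{k+1})\sqrt{\beta_{k+1} Q^{(k)}}$ for $k \geq 2$ (with $e_1 = 0$). Then $Q^{(M)} \geq \sum_{m=1}^M \beta_m + \sum_{i\neq j}\sqrt{\beta_i\beta_j}\cos(e_i)\cos(e_j)$. -/

import Mathlib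

open Real Finset

theorem stmt_8 (M : ℕ) (hM : 2 ≤ M) (β e : ℕ → ℝ) (hβ : ∀ m, 0 < β m)
    (he : ∀ m, e m ∈ Set.Icc (-(π / 2)) (π / 2)) (he1 : e 1 = 0)
    (Q : ℕ → ℝ)
    (hQ2 : Q 2 = β 1 + β 2 + 2 * Real.sqrt (β 1 * β 2) * Real.cos (e 2))
    (hrec : ∀ k, 2 ≤ k →
      Q (k + 1) = β (k + 1) + Q k
        + 2 * Real.cos (e (k + 1)) * Real.sqrt (β (k + 1) * Q k)) :
    Q M ≥ ∑ m ∈ Finset.Icc 1 M, β m +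
      ∑ i ∈ Finset.Icc 1 M, ∑ j ∈ Finset.Icc 1 M, if i ≠ j then
        Real.sqrt (β i * β j) * Real.cos (e i) * Real.cos (e j) else 0 := by
  set a : ℕ → ℝ := fun m => Real.sqrt (β m) * Real.cos (e m) with ha
  have hcos : ∀ m, 0 ≤ Real.cos (e m) := fun m =>
    Real.cos_nonneg_of_mem_Icc (by simpa using (he m))
  have ha0 : ∀ m, 0 ≤ a m := fun m =>
    mul_nonneg (Real.sqrt_nonneg _) (hcos m)
  have hasq : ∀ m, a m ^ 2 = β m * Real.cos (e m) ^ 2 := by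
    intro m
    rw [ha]
    rw [mul_pow, Real.sq_sqrt (hβ m).le]
  have hale : ∀ m, a m ^ 2 ≤ β m := by
    intro m
    rw [hasq m]
    nlinarith [Real.cos_sq_le_one (e m), (hβ m).le]
  have key : ∀ k, 2 ≤ k →
      Q k ≥ (∑ m ∈ Finset.Icc 1 k, a m) ^ 2
        + ∑ m ∈ Finset.Icc 1 k, (β m - a m ^ 2) := by
    intro k hk
    induction k, hk using Nat.le_induction with
    | base =>
      have h12 : Finset.Icc 1 2 = {1, 2} := by decide
      rw [h12, Finset.sum_pair (by norm_num), Finset.sum_pair (by norm_num)]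
      have ha1 : a 1 = Real.sqrt (β 1) := by
        rw [ha]; simp [he1]
      have hsm : Real.sqrt (β 1 * β 2) = Real.sqrt (β 1) * Real.sqrt (β 2) :=
        Real.sqrt_mul (hβ 1).le _
      rw [hQ2, hsm, ha1]
      have h1 : Real.sqrt (β 1) ^ 2 = β 1 := Real.sq_sqrt (hβ 1).le
      have h2 : a 2 = Real.sqrt (β 2) * Real.cos (e 2) := by rw [ha]
      have heq : (Real.sqrt (β 1) + a 2) ^ 2 + (β 1 - Real.sqrt (β 1) ^ 2 + (β 2 - a 2 ^ 2))
          = β 1 + β 2 + 2 * (Real.sqrt (β 1) * Real.sqrt (β 2)) * Real.cos (e 2) := by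
        rw [h2]; ring
      linarith [heq.ge]
    | succ k hk IH =>
      have hS0 : 0 ≤ ∑ m ∈ Finset.Icc 1 k, a m :=
        Finset.sum_nonneg fun m _ => ha0 m
      have hB0 : 0 ≤ ∑ m ∈ Finset.Icc 1 k, (β m - a m ^ 2) :=
        Finset.sum_nonneg fun m _ => by linarith [hale m]
      have hQ0 : 0 ≤ Q k := by nlinarith
      have hsqrtQ : (∑ m ∈ Finset.Icc 1 k, a m) ≤ Real.sqrt (Q k) := by
        rw [show (∑ m ∈ Finset.Icc 1 k, a m) = Real.sqrt ((∑ m ∈ Finset.Icc 1 k, a m) ^ 2) from (Real.sqrt_sq hS0).symm]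
        apply Real.sqrt_le_sqrt
        nlinarith
      have hsm : Real.sqrt (β (k+1) * Q k) = Real.sqrt (β (k+1)) * Real.sqrt (Q k) :=
        Real.sqrt_mul (hβ _).le _
      rw [hrec k hk, hsm]
      rw [Finset.sum_Icc_succ_top (by omega : 1 ≤ k + 1),
          Finset.sum_Icc_succ_top (by omega : 1 ≤ k + 1)]
      have haeq : a (k+1) = Real.sqrt (β (k+1)) * Real.cos (e (k+1)) := by rw [ha]
      nlinarith [hcos (k+1), Real.sqrt_nonneg (β (k+1)), Real.sqrt_nonneg (Q k),
        mul_nonneg (mul_nonneg (hcos (k+1)) (Real.sqrt_nonneg (β (k+1))))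
          (sub_nonneg.mpr hsqrtQ)]
  have hQM := key M hM
  have hsq : (∑ m ∈ Finset.Icc 1 M, a m) ^ 2
      = ∑ i ∈ Finset.Icc 1 M, ∑ j ∈ Finset.Icc 1 M, a i * a j := by
    rw [sq, Finset.sum_mul_sum]
  have hsplit : ∀ i ∈ Finset.Icc 1 M, ∀ j ∈ Finset.Icc 1 M,
      a i * a j = (if i ≠ j then
        Real.sqrt (β i * β j) * Real.cos (e i) * Real.cos (e j) else 0)
        + (if i = j then a i ^ 2 else 0) := by
    intro i _ j _
    by_cases h : i = j
    · simp [h, sq]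
    · simp only [h, if_neg, ne_eq, not_false_iff, if_true, if_false, add_zero]
      rw [ha, Real.sqrt_mul (hβ i).le]
      ring
  have hdiag : ∑ i ∈ Finset.Icc 1 M, ∑ j ∈ Finset.Icc 1 M,
      (if i = j then a i ^ 2 else 0) = ∑ i ∈ Finset.Icc 1 M, a i ^ 2 := by
    apply Finset.sum_congr rfl
    intro i hi
    simp [Finset.sum_ite_eq, hi]
  have hexp : (∑ m ∈ Finset.Icc 1 M, a m) ^ 2
      = (∑ i ∈ Finset.Icc 1 M, ∑ j ∈ Finset.Icc 1 M, if i ≠ j then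
          Real.sqrt (β i * β j) * Real.cos (e i) * Real.cos (e j) else 0)
        + ∑ i ∈ Finset.Icc 1 M, a i ^ 2 := by
    rw [hsq]
    rw [Finset.sum_congr rfl fun i hi =>
      Finset.sum_congr rfl fun j hj => hsplit i hi j hj]
    rw [← hdiag, ← Finset.sum_add_distrib]
    apply Finset.sum_congr rfl
    intro i _
    rw [Finset.sum_add_distrib]
  have hsub : ∑ m ∈ Finset.Icc 1 M, (β m - a m ^ 2)
      = ∑ m ∈ Finset.Icc 1 M, β m - ∑ m ∈ Finset.Icc 1 M, a m ^ 2 :=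
    Finset.sum_sub_distrib _ _
  linarith [hQM, hexp.ge, hexp.le]
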